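/- arXiv:2308.16720 — 2 statements merged into one kernel-verified Lean document; each statement's English description precedes it below -/
import Mathlib

section
/- Let H be a real Hilbert space, r ∈ ℕ, and let u, v : Fin r → H be orthonormal families whose Gram matrix is diagonal: ⟨u i, v j⟩ = 0 for i ≠ j and ⟨u i, v i⟩ = σ i with 0 ≤ σ i ≤ 1. Let P_U and P_V be the orthogonal projections of H onto the spans of {u i} and {v i}. Then for every index i : Fin r and all real numbers x, y, one has ‖(P_U − P_V)(x • u i + y • v i)‖² = (1 − (σ i)²) · ‖x • u i + y • v i‖². -/
open scoped InnerProductSpace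

/-- The orthogonal projection of a real Hilbert space onto the (finite-dimensional, hence
complete) span of a finite family, viewed as a continuous linear map `H →L[ℝ] H`. -/
noncomputable def spanProj {H : Type*} [NormedAddCommGroup H] [InnerProductSpace ℝ H]
    [CompleteSpace H] {r : ℕ} (u : Fin r → H) : H →L[ℝ] H :=
  haveI : FiniteDimensional ℝ (Submodule.span ℝ (Set.range u)) :=
    FiniteDimensional.span_of_finite ℝ (Set.finite_range u)
  (Submodule.span ℝ (Set.range u)).subtypeL.comp
    (Submodule.orthogonalProjectionOnto (Submodule.span ℝ (Set.range u)))

lemma spanProj_eq {H : Type*} [NormedAddCommGroup H] [InnerProductSpace ℝ H]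
    [CompleteSpace H] {r : ℕ} (u : Fin r → H) (w m : H)
    (hm : m ∈ Submodule.span ℝ (Set.range u))
    (h : ∀ j, ⟪w - m, u j⟫_ℝ = 0) : spanProj u w = m := by
  haveI : FiniteDimensional ℝ (Submodule.span ℝ (Set.range u)) :=
    FiniteDimensional.span_of_finite ℝ (Set.finite_range u)
  have : (Submodule.orthogonalProjectionOnto (Submodule.span ℝ (Set.range u)) w : H) = m := by
    rw [← Submodule.starProjection_apply]
    apply Submodule.eq_starProjection_of_mem_of_inner_eq_zero hm
    intro z hz
    induction hz using Submodule.span_induction with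
    | mem z hz => obtain ⟨j, rfl⟩ := hz; exact h j
    | zero => simp
    | add a b _ _ ha hb => rw [inner_add_right, ha, hb, add_zero]
    | smul c a _ ha => rw [inner_smul_right, ha, mul_zero]
  simpa [spanProj] using this

/-- If `u, v` are orthonormal families in a real Hilbert space with diagonal Gram matrix
`⟪u i, v j⟫ = δ_{ij} σ i`, `0 ≤ σ i ≤ 1`, then for every `i` and all reals `x, y`,
`‖(P_U - P_V)(x • u i + y • v i)‖² = (1 - (σ i)²) ‖x • u i + y • v i‖²`. -/
theorem stmt2 {H : Type*} [NormedAddCommGroup H] [InnerProductSpace ℝ H] [CompleteSpace H]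
    {r : ℕ} (u v : Fin r → H) (hu : Orthonormal ℝ u) (hv : Orthonormal ℝ v)
    (σ : Fin r → ℝ) (hσ0 : ∀ i, 0 ≤ σ i) (hσ1 : ∀ i, σ i ≤ 1)
    (hoff : ∀ i j, i ≠ j → ⟪u i, v j⟫_ℝ = 0)
    (hdiag : ∀ i, ⟪u i, v i⟫_ℝ = σ i) :
    ∀ (i : Fin r) (x y : ℝ),
      ‖(spanProj u - spanProj v) (x • u i + y • v i)‖ ^ 2
        = (1 - σ i ^ 2) * ‖x • u i + y • v i‖ ^ 2 := by
  intro i x y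
  have huu := orthonormal_iff_ite.mp hu
  have hvv := orthonormal_iff_ite.mp hv
  have huv : ∀ j k : Fin r, ⟪u j, v k⟫_ℝ = if j = k then σ j else 0 := by
    intro j k
    rcases eq_or_ne j k with rfl | h
    · simp [hdiag]
    · simp [h, hoff j k h]
  have hvu : ∀ j k : Fin r, ⟪v j, u k⟫_ℝ = if j = k then σ j else 0 := by
    intro j k
    rw [real_inner_comm, huv]
    rcases eq_or_ne j k with rfl | h
    · simp
    · simp [h, h.symm]
  have hPu : spanProj u (x • u i + y • v i) = (x + y * σ i) • u i := by
    apply spanProj_eq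
    · exact Submodule.smul_mem _ _ (Submodule.subset_span ⟨i, rfl⟩)
    · intro j
      simp only [inner_sub_left, inner_add_left, real_inner_smul_left, huu, hvu]
      rcases eq_or_ne i j with rfl | h
      · simp
      · simp [h]
  have hPv : spanProj v (x • u i + y • v i) = (x * σ i + y) • v i := by
    apply spanProj_eq
    · exact Submodule.smul_mem _ _ (Submodule.subset_span ⟨i, rfl⟩)
    · intro j
      simp only [inner_sub_left, inner_add_left, real_inner_smul_left, hvv, huv]
      rcases eq_or_ne i j with rfl | h
      · simp
      · simp [h]
  have key : (spanProj u - spanProj v) (x • u i + y • v i)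
      = (x + y * σ i) • u i - (x * σ i + y) • v i := by
    simp [ContinuousLinearMap.sub_apply, hPu, hPv]
  rw [key]
  have hn : ∀ (a b : ℝ), ‖a • u i + b • v i‖ ^ 2 = a^2 + 2*a*b*σ i + b^2 := by
    intro a b
    rw [← real_inner_self_eq_norm_sq]
    simp only [inner_add_left, inner_add_right, real_inner_smul_left, real_inner_smul_right,
      huu, hvv, huv, hvu, real_inner_comm (v i) (u i)]
    simp; ring
  have hn' : ((x + y * σ i) • u i - (x * σ i + y) • v i)
      = (x + y * σ i) • u i + (-(x * σ i + y)) • v i := by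
    rw [neg_smul]; abel
  rw [hn', hn, hn]
  ring
end

section
/- In the Tucker setting below, let X ∈ M, fix μ : Fin d, and suppose there are an orthonormal family (w_k)_{k ∈ Fin (r μ)} in ℓ²(ℕ; ℝ) and a pairwise orthogonal family (z_k)_{k ∈ Fin (r μ)} in the ℓ²-space of real functions on {ν : Fin d // ν ≠ μ} → ℕ such that X(i) = ∑_k w_k(i μ) · z_k(i restricted to indices ν ≠ μ) for every i : Fin d → ℕ. Fix an index k₀ : Fin (r μ) and define X̃ ∈ H by X̃(i) = ∑_{k ≠ k₀} w_k(i μ) · z_k(i restricted to indices ν ≠ μ). Then ‖X − X̃‖ = ‖z_{k₀}‖, X̃ lies in the weak closure of M, and X̃ ∉ M. -/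
open scoped InnerProductSpace ENNReal

namespace Tucker

open scoped NNReal

/-! ### Generic auxiliary lemmas -/

section Split
variable {ι : Type} [Fintype ι] [DecidableEq ι]

omit [Fintype ι] in
lemma piSplitAt_symm_self (ν₀ : ι) (κ : ι → Type*) (a : κ ν₀) (b : ∀ ν : {ν // ν ≠ ν₀}, κ ν.1) :
    (Equiv.piSplitAt ν₀ κ).symm (a, b) ν₀ = a := by
  simp

omit [Fintype ι] in
lemma piSplitAt_symm_ne (ν₀ : ι) (κ : ι → Type*) (a : κ ν₀) (b : ∀ ν : {ν // ν ≠ ν₀}, κ ν.1)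
    (ν : {ν // ν ≠ ν₀}) : (Equiv.piSplitAt ν₀ κ).symm (a, b) ν.1 = b ν := by
  simp [ν.2]

lemma sum_split {M : Type*} [AddCommMonoid M] (ν₀ : ι) (κ : ι → Type*) [∀ ν, Fintype (κ ν)]
    (f : (∀ ν, κ ν) → M) :
    ∑ k, f k = ∑ a : κ ν₀, ∑ b : ∀ ν : {ν // ν ≠ ν₀}, κ ν.1,
      f ((Equiv.piSplitAt ν₀ κ).symm (a, b)) := by
  rw [← Equiv.sum_comp (Equiv.piSplitAt ν₀ κ).symm f, Fintype.sum_prod_type]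

lemma prod_split {M : Type*} [CommMonoid M] (ν₀ : ι) (f : ι → M) :
    ∏ ν, f ν = f ν₀ * ∏ ν : {ν // ν ≠ ν₀}, f ν.1 := by
  rw [← Finset.mul_prod_erase Finset.univ f (Finset.mem_univ ν₀)]
  congr 1
  exact Finset.prod_subtype _ (fun x => by simp [eq_comm]) f
end Split

section TsumPi

private lemma tsum_pi_prod_aux : ∀ (N : ℕ) (ι : Type) [Fintype ι] [DecidableEq ι],
    Fintype.card ι = N → ∀ (h : ι → ℕ → ℝ≥0∞),
    ∑' i : ι → ℕ, ∏ ν, h ν (i ν) = ∏ ν, ∑' n, h ν n := by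
  intro N
  induction N with
  | zero =>
    intro ι _ _ hcard h
    have : IsEmpty ι := Fintype.card_eq_zero_iff.mp hcard
    simp [tsum_eq_single (fun x => isEmptyElim x : ι → ℕ)
      (fun b hb => absurd (Subsingleton.elim b _) hb)]
  | succ N ih =>
    intro ι _ _ hcard h
    obtain ⟨ν₀⟩ : Nonempty ι := Fintype.card_pos_iff.mp (by omega)
    have hcard' : Fintype.card {ν : ι // ν ≠ ν₀} = N := by
      have h1 : Fintype.card {ν : ι // ν = ν₀} = 1 := by simp [Fintype.card_subtype_eq]
      have h2 := Fintype.card_subtype_compl (p := fun ν : ι => ν = ν₀)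
      have h3 : Fintype.card {ν : ι // ¬ν = ν₀} = Fintype.card {ν : ι // ν ≠ ν₀} := rfl
      omega
    calc ∑' i : ι → ℕ, ∏ ν, h ν (i ν)
        = ∑' p : ℕ × ({ν : ι // ν ≠ ν₀} → ℕ),
            ∏ ν, h ν ((Equiv.piSplitAt ν₀ (fun _ : ι => ℕ)).symm p ν) := by
          rw [← Equiv.tsum_eq (Equiv.piSplitAt ν₀ (fun _ : ι => ℕ)).symm
            (fun i => ∏ ν, h ν (i ν))]
      _ = ∑' n : ℕ, ∑' j : {ν : ι // ν ≠ ν₀} → ℕ, h ν₀ n * ∏ ν : {ν : ι // ν ≠ ν₀}, h ν.1 (j ν) := by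
          rw [ENNReal.tsum_prod']
          congr 1; ext n; congr 1; ext j
          rw [prod_split ν₀]
          congr 1
          · congr 1; exact piSplitAt_symm_self ν₀ (fun _ : ι => ℕ) n j
          · exact Finset.prod_congr rfl fun ν _ => by
              congr 1; exact piSplitAt_symm_ne ν₀ (fun _ : ι => ℕ) n j ν
      _ = (∑' n, h ν₀ n) * ∑' j : {ν : ι // ν ≠ ν₀} → ℕ, ∏ ν : {ν : ι // ν ≠ ν₀}, h ν.1 (j ν) := by
          rw [← ENNReal.tsum_mul_right]
          congr 1; ext n
          rw [ENNReal.tsum_mul_left]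
      _ = ∏ ν, ∑' n, h ν n := by
          rw [ih _ hcard' (fun ν => h ν.1), prod_split (ι := ι) ν₀ (fun ν => ∑' n, h ν n)]

lemma tsum_pi_prod {ι : Type} [Fintype ι] [DecidableEq ι] (h : ι → ℕ → ℝ≥0∞) :
    ∑' i : ι → ℕ, ∏ ν, h ν (i ν) = ∏ ν, ∑' n, h ν n :=
  tsum_pi_prod_aux (Fintype.card ι) ι rfl h

end TsumPi

section LinIndep

private lemma prod_fun_eq_zero_aux : ∀ (N : ℕ) (ι : Type) [Fintype ι] [DecidableEq ι],
    Fintype.card ι = N → ∀ (κ : ι → Type) [∀ ν, Fintype (κ ν)] (g : ∀ ν, κ ν → ℕ → ℝ),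
    (∀ ν (c : κ ν → ℝ), (∀ n, ∑ a, c a * g ν a n = 0) → c = 0) →
    ∀ (dv : (∀ ν, κ ν) → ℝ),
    (∀ i : ι → ℕ, ∑ b, dv b * ∏ ν, g ν (b ν) (i ν) = 0) → dv = 0 := by
  intro N
  induction N with
  | zero =>
    intro ι _ _ hcard κ _ g hg dv hdv
    have : IsEmpty ι := Fintype.card_eq_zero_iff.mp hcard
    funext b
    have h0 := hdv (fun x => isEmptyElim x)
    have hb : ∀ b' : ∀ ν, κ ν, b' = b := fun b' => funext fun x => isEmptyElim x
    rw [Fintype.sum_eq_single b (fun b' hb' => absurd (hb b') hb')] at h0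
    simpa using h0
  | succ N ih =>
    intro ι _ _ hcard κ _ g hg dv hdv
    obtain ⟨ν₀⟩ : Nonempty ι := Fintype.card_pos_iff.mp (by omega)
    have hcard' : Fintype.card {ν : ι // ν ≠ ν₀} = N := by
      have h1 : Fintype.card {ν : ι // ν = ν₀} = 1 := by simp [Fintype.card_subtype_eq]
      have h2 := Fintype.card_subtype_compl (p := fun ν : ι => ν = ν₀)
      have h3 : Fintype.card {ν : ι // ¬ν = ν₀} = Fintype.card {ν : ι // ν ≠ ν₀} := rfl
      omega
    have key : ∀ (j : {ν : ι // ν ≠ ν₀} → ℕ) (a : κ ν₀),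
        ∑ b' : ∀ ν : {ν : ι // ν ≠ ν₀}, κ ν.1,
          dv ((Equiv.piSplitAt ν₀ κ).symm (a, b'))
            * ∏ ν : {ν : ι // ν ≠ ν₀}, g ν.1 (b' ν) (j ν) = 0 := by
      intro j a
      have := hg ν₀ (fun a => ∑ b' : ∀ ν : {ν : ι // ν ≠ ν₀}, κ ν.1,
          dv ((Equiv.piSplitAt ν₀ κ).symm (a, b'))
            * ∏ ν : {ν : ι // ν ≠ ν₀}, g ν.1 (b' ν) (j ν)) ?_
      · exact congrFun this a
      intro n
      have h0 := hdv ((Equiv.piSplitAt ν₀ (fun _ : ι => ℕ)).symm (n, j))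
      rw [sum_split ν₀ κ] at h0
      rw [← h0]
      refine Finset.sum_congr rfl fun a _ => ?_
      rw [Finset.sum_mul]
      refine Finset.sum_congr rfl fun b' _ => ?_
      rw [prod_split ν₀ (fun ν => g ν ((Equiv.piSplitAt ν₀ κ).symm (a, b') ν)
        ((Equiv.piSplitAt ν₀ (fun _ : ι => ℕ)).symm (n, j) ν))]
      rw [piSplitAt_symm_self ν₀ κ a b', piSplitAt_symm_self ν₀ (fun _ : ι => ℕ) n j]
      have heq : ∏ ν : {ν : ι // ν ≠ ν₀}, g ν.1 ((Equiv.piSplitAt ν₀ κ).symm (a, b') ν.1)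
            ((Equiv.piSplitAt ν₀ (fun _ : ι => ℕ)).symm (n, j) ν.1)
          = ∏ ν : {ν : ι // ν ≠ ν₀}, g ν.1 (b' ν) (j ν) :=
        Finset.prod_congr rfl fun ν _ => by
          rw [piSplitAt_symm_ne ν₀ κ a b' ν, piSplitAt_symm_ne ν₀ (fun _ : ι => ℕ) n j ν]
      rw [heq]
      ring
    have key2 : ∀ a : κ ν₀, (fun b' : ∀ ν : {ν : ι // ν ≠ ν₀}, κ ν.1 =>
        dv ((Equiv.piSplitAt ν₀ κ).symm (a, b'))) = 0 := by
      intro a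
      exact ih _ hcard' (fun ν => κ ν.1) (fun ν => g ν.1) (fun ν => hg ν.1) _ (fun j => key j a)
    funext b
    have hb : (Equiv.piSplitAt ν₀ κ).symm (b ν₀, fun ν => b ν.1) = b :=
      (Equiv.piSplitAt ν₀ κ).symm_apply_apply b
    have := congrFun (key2 (b ν₀)) (fun ν => b ν.1)
    rw [hb] at this
    simpa using this

lemma prod_fun_eq_zero {ι : Type} [Fintype ι] [DecidableEq ι]
    (κ : ι → Type) [∀ ν, Fintype (κ ν)] (g : ∀ ν, κ ν → ℕ → ℝ)
    (hg : ∀ ν (c : κ ν → ℝ), (∀ n, ∑ a, c a * g ν a n = 0) → c = 0)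
    (dv : (∀ ν, κ ν) → ℝ)
    (hdv : ∀ i : ι → ℕ, ∑ b, dv b * ∏ ν, g ν (b ν) (i ν) = 0) : dv = 0 :=
  prod_fun_eq_zero_aux (Fintype.card ι) ι rfl κ g hg dv hdv

end LinIndep

/-! ### ℓ² helper lemmas -/

section L2

lemma lp2_summable_sq {α : Type*} (f : lp (fun _ : α => ℝ) 2) :
    Summable fun x => ((f : ∀ _ : α, ℝ) x) ^ 2 := by
  have := (memℓp_gen_iff (by norm_num : 0 < (2 : ℝ≥0∞).toReal)).1 (lp.memℓp f)
  refine this.congr fun x => ?_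
  rw [ENNReal.toReal_ofNat, show ((2 : ℝ)) = ((2 : ℕ) : ℝ) by norm_num,
    Real.rpow_natCast, Real.norm_eq_abs, sq_abs]

lemma lp2_norm_sq {α : Type*} (f : lp (fun _ : α => ℝ) 2) :
    ‖f‖ ^ 2 = ∑' x, ((f : ∀ _ : α, ℝ) x) ^ 2 := by
  have h := lp.norm_rpow_eq_tsum (by norm_num : 0 < (2 : ℝ≥0∞).toReal) f
  rw [ENNReal.toReal_ofNat] at h
  calc ‖f‖ ^ (2 : ℕ) = ‖f‖ ^ (2 : ℝ) := by
        rw [show ((2 : ℝ)) = ((2 : ℕ) : ℝ) by norm_num, Real.rpow_natCast]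
    _ = ∑' x, ‖(f : ∀ _ : α, ℝ) x‖ ^ (2 : ℝ) := h
    _ = ∑' x, ((f : ∀ _ : α, ℝ) x) ^ 2 := by
        congr 1; funext x
        rw [show ((2 : ℝ)) = ((2 : ℕ) : ℝ) by norm_num, Real.rpow_natCast,
          Real.norm_eq_abs, sq_abs]

end L2


/-! ### Original definitions -/

variable (d : ℕ) (r : Fin d → ℕ)

/-- Core tensor space with the Frobenius (Euclidean) norm. -/
abbrev Ec := EuclideanSpace ℝ (∀ μ : Fin d, Fin (r μ))

/-- `ℓ²(ℕ; ℝ)`. -/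
noncomputable abbrev l2N := lp (fun _ : ℕ => ℝ) 2

/-- The ambient space `H = ℓ²(ℕ^d; ℝ)`. -/
noncomputable abbrev Hsp := lp (fun _ : Fin d → ℕ => ℝ) 2

/-- The `μ`-th matricization of a core tensor. -/
def matricize (μ : Fin d) (C : Ec d r) :
    Matrix (Fin (r μ)) (∀ ν : {ν : Fin d // ν ≠ μ}, Fin (r ν.1)) ℝ :=
  Matrix.of fun a b =>
    C fun ν => if h : ν = μ then Fin.cast (congrArg r h).symm a else b ⟨ν, h⟩

/-- Full multilinear rank. -/
def fullRank (C : Ec d r) : Prop := ∀ μ : Fin d, (matricize d r μ C).rank = r μ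

/-- Multilinear multiplication `C ×₁ T¹ ⋯ ×_d T^d`. -/
def mulMul (T : ∀ μ : Fin d, Matrix (Fin (r μ)) (Fin (r μ)) ℝ) (C : Ec d r) : Ec d r :=
  WithLp.toLp 2 fun k => ∑ j : ∀ μ : Fin d, Fin (r μ), (∏ μ, T μ (k μ) (j μ)) * C j

/-- Gram matrix of a finite family in `ℓ²(ℕ; ℝ)`. -/
noncomputable def gram {n : ℕ} (f : Fin n → l2N) : Matrix (Fin n) (Fin n) ℝ :=
  Matrix.of fun a b => ⟪f a, f b⟫_ℝ

open Classical in
/-- The tensor `Ψ(C, u)` with entries `i ↦ ∑_k C k ∏ μ, u^μ_{k μ} (i μ)`. -/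
noncomputable def Psi (C : Ec d r) (u : ∀ μ : Fin d, Fin (r μ) → l2N) : Hsp d :=
  if h : Memℓp (fun i : Fin d → ℕ =>
      ∑ k : ∀ μ : Fin d, Fin (r μ), C k * ∏ μ, (u μ (k μ) : ℕ → ℝ) (i μ)) 2
  then ⟨_, h⟩ else 0

/-- The low-rank manifold `M`. -/
def Mset (Mc : Set (Ec d r)) : Set (Hsp d) :=
  {X | ∃ C ∈ Mc, ∃ u : ∀ μ : Fin d, Fin (r μ) → l2N,
    (∀ μ, IsUnit (gram (u μ))) ∧ X = Psi d r C u}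

/-- The identity map into the weak topology. -/
def toWeak : Hsp d → WeakSpace ℝ (Hsp d) := fun x => x

/-- The weak closure of a subset of `H`. -/
def weakClosure (S : Set (Hsp d)) : Set (Hsp d) :=
  toWeak d ⁻¹' closure (toWeak d '' S)


/-- The `ℓ²`-space over the complementary index set. -/
noncomputable abbrev l2C (μ : Fin d) := lp (fun _ : {ν : Fin d // ν ≠ μ} → ℕ => ℝ) 2


/-! ### Tucker-specific lemmas -/

section Tuck
variable {d : ℕ} {r : Fin d → ℕ}

/-- Restriction of a multi-index to the complement of `μ`. -/
abbrev restr (μ : Fin d) (i : Fin d → ℕ) : {ν : Fin d // ν ≠ μ} → ℕ := fun ν => i ν.1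

/-- Insertion of a value at position `μ`. -/
def ins (μ : Fin d) (n : ℕ) (i' : {ν : Fin d // ν ≠ μ} → ℕ) : Fin d → ℕ :=
  (Equiv.piSplitAt μ (fun _ : Fin d => ℕ)).symm (n, i')

lemma ins_self (μ : Fin d) (n : ℕ) (i' : {ν : Fin d // ν ≠ μ} → ℕ) : ins μ n i' μ = n :=
  piSplitAt_symm_self μ (fun _ : Fin d => ℕ) n i'

lemma ins_restr (μ : Fin d) (n : ℕ) (i' : {ν : Fin d // ν ≠ μ} → ℕ) :
    restr μ (ins μ n i') = i' :=
  funext fun ν => piSplitAt_symm_ne μ (fun _ : Fin d => ℕ) n i' ν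

lemma ins_eq (μ : Fin d) (i : Fin d → ℕ) : ins μ (i μ) (restr μ i) = i :=
  (Equiv.piSplitAt μ (fun _ : Fin d => ℕ)).symm_apply_apply i

set_option maxHeartbeats 1000000 in
/-- Membership of an elementary tensor in `ℓ²`. -/
lemma memℓp_elem (μ : Fin d) (g : l2N) (h : l2C d μ) :
    Memℓp (fun i : Fin d → ℕ => (g : ℕ → ℝ) (i μ) * (h : ({ν : Fin d // ν ≠ μ} → ℕ) → ℝ) (restr μ i)) 2 := by
  apply memℓp_gen
  have hg : Summable fun n => ‖((g : ℕ → ℝ) n) ^ 2‖ :=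
    (lp2_summable_sq g).abs.congr fun n => (Real.norm_eq_abs _).symm ▸ rfl
  have hh : Summable fun i' => ‖((h : ({ν : Fin d // ν ≠ μ} → ℕ) → ℝ) i') ^ 2‖ :=
    (lp2_summable_sq h).abs.congr fun n => (Real.norm_eq_abs _).symm ▸ rfl
  have hs : Summable fun p : ℕ × ({ν : Fin d // ν ≠ μ} → ℕ) =>
      ((g : ℕ → ℝ) p.1) ^ 2 * ((h : ({ν : Fin d // ν ≠ μ} → ℕ) → ℝ) p.2) ^ 2 :=
    summable_mul_of_summable_norm hg hh
  have := (Equiv.piSplitAt μ (fun _ : Fin d => ℕ)).summable_iff.2 hs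
  refine this.congr fun i => ?_
  rw [ENNReal.toReal_ofNat, show ((2 : ℝ)) = ((2 : ℕ) : ℝ) by norm_num,
    Real.rpow_natCast, Real.norm_eq_abs, sq_abs]
  show ((g : ℕ → ℝ) (i μ)) ^ 2 * ((h : ({ν : Fin d // ν ≠ μ} → ℕ) → ℝ) (restr μ i)) ^ 2 = _
  ring

/-- The elementary tensor `g ⊗ h` as an element of `H`. -/
noncomputable def elemT (μ : Fin d) (g : l2N) (h : l2C d μ) : Hsp d :=
  ⟨_, memℓp_elem μ g h⟩

lemma elemT_apply (μ : Fin d) (g : l2N) (h : l2C d μ) (i : Fin d → ℕ) :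
    (elemT μ g h : (Fin d → ℕ) → ℝ) i = (g : ℕ → ℝ) (i μ) * (h : ({ν : Fin d // ν ≠ μ} → ℕ) → ℝ) (restr μ i) := rfl

lemma norm_elemT (μ : Fin d) (g : l2N) (h : l2C d μ) : ‖elemT μ g h‖ = ‖g‖ * ‖h‖ := by
  have hg : Summable fun n => ‖((g : ℕ → ℝ) n) ^ 2‖ :=
    (lp2_summable_sq g).abs.congr fun n => (Real.norm_eq_abs _).symm ▸ rfl
  have hh : Summable fun i' => ‖((h : ({ν : Fin d // ν ≠ μ} → ℕ) → ℝ) i') ^ 2‖ :=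
    (lp2_summable_sq h).abs.congr fun n => (Real.norm_eq_abs _).symm ▸ rfl
  have hsq : ‖elemT μ g h‖ ^ 2 = (‖g‖ * ‖h‖) ^ 2 := by
    rw [lp2_norm_sq]
    calc ∑' i, ((elemT μ g h : (Fin d → ℕ) → ℝ) i) ^ 2
        = ∑' p : ℕ × ({ν : Fin d // ν ≠ μ} → ℕ), ((g : ℕ → ℝ) p.1) ^ 2 * ((h : ({ν : Fin d // ν ≠ μ} → ℕ) → ℝ) p.2) ^ 2 := by
          rw [← Equiv.tsum_eq (Equiv.piSplitAt μ (fun _ : Fin d => ℕ))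
            (f := fun p : ℕ × ({ν : Fin d // ν ≠ μ} → ℕ) => ((g : ℕ → ℝ) p.1) ^ 2 * ((h : ({ν : Fin d // ν ≠ μ} → ℕ) → ℝ) p.2) ^ 2)]
          refine tsum_congr fun i => ?_
          rw [elemT_apply]
          show _ = ((g : ℕ → ℝ) (i μ)) ^ 2 * ((h : ({ν : Fin d // ν ≠ μ} → ℕ) → ℝ) (restr μ i)) ^ 2
          ring
      _ = (∑' n, ((g : ℕ → ℝ) n) ^ 2) * ∑' i', ((h : ({ν : Fin d // ν ≠ μ} → ℕ) → ℝ) i') ^ 2 :=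
          (tsum_mul_tsum_of_summable_norm hg hh).symm
      _ = (‖g‖ * ‖h‖) ^ 2 := by rw [← lp2_norm_sq, ← lp2_norm_sq]; ring
  exact (sq_eq_sq₀ (norm_nonneg _) (mul_nonneg (norm_nonneg _) (norm_nonneg _))).1 hsq

set_option maxHeartbeats 1000000 in
/-- An elementary product of `ℓ²` sequences over all modes is in `ℓ²`. -/
lemma memℓp_prod (g : Fin d → l2N) :
    Memℓp (fun i : Fin d → ℕ => ∏ ν, (g ν : ℕ → ℝ) (i ν)) 2 := by
  apply memℓp_gen
  have hfac : ∀ ν : Fin d, Summable fun n => ‖(g ν : ℕ → ℝ) n‖₊ ^ 2 := by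
    intro ν
    rw [← NNReal.summable_coe]
    refine (lp2_summable_sq (g ν)).congr fun n => ?_
    push_cast
    rw [Real.norm_eq_abs, sq_abs]
  have hF : Summable fun i : Fin d → ℕ => ∏ ν, ‖(g ν : ℕ → ℝ) (i ν)‖₊ ^ 2 := by
    rw [← ENNReal.tsum_coe_ne_top_iff_summable]
    have heq : ∑' i : Fin d → ℕ, ((∏ ν, ‖(g ν : ℕ → ℝ) (i ν)‖₊ ^ 2 : ℝ≥0) : ℝ≥0∞)
        = ∏ ν, ∑' n, ((‖(g ν : ℕ → ℝ) n‖₊ ^ 2 : ℝ≥0) : ℝ≥0∞) := by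
      rw [← tsum_pi_prod (fun ν n => ((‖(g ν : ℕ → ℝ) n‖₊ ^ 2 : ℝ≥0) : ℝ≥0∞))]
      exact tsum_congr fun i => by push_cast; rfl
    rw [heq]
    refine (ENNReal.prod_lt_top fun ν _ => ?_).ne
    rw [← ENNReal.coe_tsum (hfac ν)]
    exact ENNReal.coe_lt_top
  have hFr : Summable fun i : Fin d → ℕ => ((∏ ν, ‖(g ν : ℕ → ℝ) (i ν)‖₊ ^ 2 : ℝ≥0) : ℝ) :=
    NNReal.summable_coe.2 hF
  refine hFr.congr fun i => ?_
  rw [ENNReal.toReal_ofNat, show ((2 : ℝ)) = ((2 : ℕ) : ℝ) by norm_num, Real.rpow_natCast]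
  push_cast
  rw [norm_prod, ← Finset.prod_pow]

/-- The entries of `Ψ(C,u)` are in `ℓ²`. -/
lemma memℓp_psi (C : Ec d r) (u : ∀ μ : Fin d, Fin (r μ) → l2N) :
    Memℓp (fun i : Fin d → ℕ =>
      ∑ k : ∀ μ : Fin d, Fin (r μ), C k * ∏ μ, (u μ (k μ) : ℕ → ℝ) (i μ)) 2 := by
  refine Memℓp.finset_sum _ fun k _ => ?_
  exact (memℓp_prod (fun ν => u ν (k ν))).const_mul (C k)

lemma psi_coe (C : Ec d r) (u : ∀ μ : Fin d, Fin (r μ) → l2N) :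
    (Psi d r C u : (Fin d → ℕ) → ℝ) = fun i =>
      ∑ k : ∀ μ : Fin d, Fin (r μ), C k * ∏ μ, (u μ (k μ) : ℕ → ℝ) (i μ) := by
  rw [Psi, dif_pos (memℓp_psi C u)]

/-- The coefficient functions in the mode-`μ` expansion of `Ψ(C,u)`. -/
noncomputable def mA (μ : Fin d) (C : Ec d r) (u : ∀ ν : Fin d, Fin (r ν) → l2N)
    (a : Fin (r μ)) (i' : {ν : Fin d // ν ≠ μ} → ℕ) : ℝ :=
  ∑ b : ∀ ν : {ν : Fin d // ν ≠ μ}, Fin (r ν.1),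
    matricize d r μ C a b * ∏ ν : {ν : Fin d // ν ≠ μ}, (u ν.1 (b ν) : ℕ → ℝ) (i' ν)

set_option maxHeartbeats 1000000 in
/-- Splitting the `Ψ` sum at mode `μ`. -/
lemma sum_split_psi (μ : Fin d) (C : Ec d r) (u : ∀ ν : Fin d, Fin (r ν) → l2N)
    (i : Fin d → ℕ) :
    ∑ k : ∀ ν : Fin d, Fin (r ν), C k * ∏ ν, (u ν (k ν) : ℕ → ℝ) (i ν)
      = ∑ a, mA μ C u a (restr μ i) * (u μ a : ℕ → ℝ) (i μ) := by
  rw [sum_split μ (fun ν => Fin (r ν))]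
  refine Finset.sum_congr rfl fun a _ => ?_
  rw [mA, Finset.sum_mul]
  refine Finset.sum_congr rfl fun b _ => ?_
  have hC : matricize d r μ C a b = C ((Equiv.piSplitAt μ (fun ν => Fin (r ν))).symm (a, b)) := by
    show C _ = C _
    refine congrArg (fun k => C k) ?_
    funext ν
    rcases eq_or_ne ν μ with hh | hh
    · subst hh
      rw [dif_pos rfl, piSplitAt_symm_self ν (fun ν => Fin (r ν)) a b]
      exact Fin.ext rfl
    · rw [dif_neg hh, piSplitAt_symm_ne μ (fun ν => Fin (r ν)) a b ⟨ν, hh⟩]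
  rw [prod_split μ
    (fun ν => (u ν ((Equiv.piSplitAt μ (fun ν => Fin (r ν))).symm (a, b) ν) : ℕ → ℝ) (i ν))]
  rw [piSplitAt_symm_self μ (fun ν => Fin (r ν)) a b]
  have heq : ∏ ν : {ν : Fin d // ν ≠ μ},
        (u ν.1 ((Equiv.piSplitAt μ (fun ν => Fin (r ν))).symm (a, b) ν.1) : ℕ → ℝ) (i ν.1)
      = ∏ ν : {ν : Fin d // ν ≠ μ}, (u ν.1 (b ν) : ℕ → ℝ) (restr μ i ν) :=
    Finset.prod_congr rfl fun ν _ => by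
      rw [piSplitAt_symm_ne μ (fun ν => Fin (r ν)) a b ν]
  rw [heq, hC]
  ring

/-- A unit Gram matrix forces vanishing of linear relations. -/
lemma gram_unit_coeffs {n : ℕ} {f : Fin n → l2N} (hf : IsUnit (gram f))
    {c : Fin n → ℝ} (hc : ∑ a, c a • f a = 0) : c = 0 := by
  have hm : Matrix.mulVec (gram f) c = 0 := by
    funext b
    show ∑ a, gram f b a * c a = 0
    have h1 : ∀ a, gram f b a * c a = ⟪f b, c a • f a⟫_ℝ := fun a => by
      rw [real_inner_smul_right]; exact mul_comm _ _
    rw [Finset.sum_congr rfl fun a _ => h1 a, ← inner_sum, hc, inner_zero_right]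
  have hinj := Matrix.mulVec_injective_iff_isUnit.2 hf
  have h0 : Matrix.mulVec (gram f) (0 : Fin n → ℝ) = 0 := Matrix.mulVec_zero _
  exact hinj (hm.trans h0.symm)

/-- Pointwise version. -/
lemma gram_unit_coeffs' {n : ℕ} {f : Fin n → l2N} (hf : IsUnit (gram f))
    {c : Fin n → ℝ} (hc : ∀ m : ℕ, ∑ a, c a * (f a : ℕ → ℝ) m = 0) : c = 0 := by
  refine gram_unit_coeffs hf ?_
  apply lp.ext
  rw [lp.coeFn_sum]
  funext m
  simp only [Finset.sum_apply, lp.coeFn_smul, Pi.smul_apply, smul_eq_mul]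
  rw [lp.coeFn_zero]
  exact (hc m).trans rfl

/-- Linear independence gives a unit Gram matrix. -/
lemma gram_unit_of_indep {n : ℕ} {f : Fin n → l2N}
    (hf : ∀ c : Fin n → ℝ, ∑ a, c a • f a = 0 → c = 0) : IsUnit (gram f) := by
  rw [← Matrix.mulVec_injective_iff_isUnit]
  have h0 : ∀ c, Matrix.mulVec (gram f) c = 0 → c = 0 := by
    intro c hc
    refine hf c ?_
    have hn : ⟪∑ a, c a • f a, ∑ a, c a • f a⟫_ℝ = 0 := by
      rw [sum_inner]
      have h1 : ∀ b, ⟪c b • f b, ∑ a, c a • f a⟫_ℝ = c b * (Matrix.mulVec (gram f) c) b := by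
        intro b
        rw [real_inner_smul_left]
        congr 1
        show ⟪f b, ∑ a, c a • f a⟫_ℝ = ∑ a, gram f b a * c a
        rw [inner_sum]
        exact Finset.sum_congr rfl fun a _ => by
          rw [real_inner_smul_right]; exact mul_comm _ _
      rw [Finset.sum_congr rfl fun b _ => h1 b]
      simp [hc]
    exact inner_self_eq_zero.1 hn
  intro c c' hcc
  have := h0 (c - c') (by rw [Matrix.mulVec_sub, hcc, sub_self])
  exact sub_eq_zero.1 this

/-- Coordinates of the coefficient combination `∑ₐ mA a i' • u μ a`. -/
lemma fm_coords (μ : Fin d) (C : Ec d r) (u : ∀ ν : Fin d, Fin (r ν) → l2N)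
    (i' : {ν : Fin d // ν ≠ μ} → ℕ) (n : ℕ) :
    ((∑ a, mA μ C u a i' • u μ a : l2N) : ℕ → ℝ) n
      = ∑ k : ∀ ν : Fin d, Fin (r ν), C k * ∏ ν, (u ν (k ν) : ℕ → ℝ) (ins μ n i' ν) := by
  rw [sum_split_psi μ C u (ins μ n i'), ins_restr, ins_self]
  rw [lp.coeFn_sum]
  simp only [Finset.sum_apply, lp.coeFn_smul, Pi.smul_apply, smul_eq_mul]

/-- Full row rank implies injectivity of `vecMul`. -/
lemma full_rank_vecMul_inj {q : ℕ} {n : Type} [Fintype n]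
    (M : Matrix (Fin q) n ℝ) (hM : M.rank = q) {c : Fin q → ℝ}
    (hc : Matrix.vecMul c M = 0) : c = 0 := by
  have hT : (Matrix.transpose M).rank = q := by rw [Matrix.rank_transpose]; exact hM
  have hker : LinearMap.ker (Matrix.mulVecLin (Matrix.transpose M)) = ⊥ := by
    have h1 := LinearMap.finrank_range_add_finrank_ker (Matrix.mulVecLin (Matrix.transpose M))
    rw [Module.finrank_fin_fun] at h1
    have h2 : Module.finrank ℝ (LinearMap.range (Matrix.mulVecLin (Matrix.transpose M))) = q := hT
    have h3 : Module.finrank ℝ (LinearMap.ker (Matrix.mulVecLin (Matrix.transpose M))) = 0 := by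
      omega
    exact (Submodule.finrank_eq_zero).1 h3
  have hmem : c ∈ LinearMap.ker (Matrix.mulVecLin (Matrix.transpose M)) := by
    rw [LinearMap.mem_ker, Matrix.mulVecLin_apply, Matrix.mulVec_transpose]
    exact hc
  rw [hker] at hmem
  exact hmem

/-- The rank-one perturbation operator `x ↦ x + (t-1)⟪w₀,x⟫ w₀`. -/
noncomputable def Atl (w₀ : l2N) (t : ℝ) : l2N →ₗ[ℝ] l2N where
  toFun := fun x => x + ((t - 1) * ⟪w₀, x⟫_ℝ) • w₀
  map_add' := by
    intro x y
    rw [inner_add_right]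
    rw [show (t - 1) * (⟪w₀, x⟫_ℝ + ⟪w₀, y⟫_ℝ)
      = (t - 1) * ⟪w₀, x⟫_ℝ + (t - 1) * ⟪w₀, y⟫_ℝ by ring, add_smul]
    abel
  map_smul' := by
    intro c x
    rw [RingHom.id_apply, real_inner_smul_right, smul_add, smul_smul]
    congr 2
    ring

lemma Atl_apply (w₀ : l2N) (t : ℝ) (x : l2N) :
    Atl w₀ t x = x + ((t - 1) * ⟪w₀, x⟫_ℝ) • w₀ := rfl

lemma Atl_inv (w₀ : l2N) (hw₀ : ‖w₀‖ = 1) {t : ℝ} (ht : t ≠ 0) (x : l2N) :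
    Atl w₀ t⁻¹ (Atl w₀ t x) = x := by
  rw [Atl_apply, Atl_apply]
  have hww : ⟪w₀, w₀⟫_ℝ = 1 := by
    rw [real_inner_self_eq_norm_sq, hw₀]; norm_num
  rw [inner_add_right, real_inner_smul_right, hww]
  rw [add_assoc, ← add_smul]
  have : (t - 1) * ⟪w₀, x⟫_ℝ + (t⁻¹ - 1) * (⟪w₀, x⟫_ℝ + (t - 1) * ⟪w₀, x⟫_ℝ * 1) = 0 := by
    field_simp
    ring
  rw [this, zero_smul, add_zero]

set_option maxHeartbeats 2000000 in
set_option synthInstance.maxHeartbeats 400000 in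
/-- Dropping one singular term from a singular value decomposition of the `μ`-th
matricization of `X ∈ M` produces a tensor `X̃` with `‖X - X̃‖ = ‖z k₀‖` which lies in the
weak closure of `M` but not in `M`. -/
theorem stmt11 (hd : 0 < d) (hr : ∀ μ, 0 < r μ) (Mc : Set (Ec d r))
    (hfull : ∀ C ∈ Mc, fullRank d r C)
    (hinv : ∀ C ∈ Mc, ∀ T : ∀ μ : Fin d, Matrix (Fin (r μ)) (Fin (r μ)) ℝ,
      (∀ μ, IsUnit (T μ)) → mulMul d r T C ∈ Mc)
    (X : Hsp d) (hX : X ∈ Mset d r Mc) (μ : Fin d)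
    (w : Fin (r μ) → l2N) (hw : Orthonormal ℝ w)
    (z : Fin (r μ) → l2C d μ)
    (hz : ∀ k l, k ≠ l → ⟪z k, z l⟫_ℝ = 0)
    (hdecomp : ∀ i : Fin d → ℕ,
      (X : ∀ _ : Fin d → ℕ, ℝ) i
        = ∑ k, (w k : ℕ → ℝ) (i μ)
            * (z k : ({ν : Fin d // ν ≠ μ} → ℕ) → ℝ) (fun ν => i ν.1))
    (k₀ : Fin (r μ)) (Xt : Hsp d)
    (hXt : ∀ i : Fin d → ℕ,
      (Xt : ∀ _ : Fin d → ℕ, ℝ) i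
        = ∑ k ∈ Finset.univ.erase k₀, (w k : ℕ → ℝ) (i μ)
            * (z k : ({ν : Fin d // ν ≠ μ} → ℕ) → ℝ) (fun ν => i ν.1)) :
    ‖X - Xt‖ = ‖z k₀‖ ∧ Xt ∈ weakClosure d (Mset d r Mc) ∧ Xt ∉ Mset d r Mc := by
  classical
  obtain ⟨C, hC, u, hgram, hXeq⟩ := hX
  have hXcoe : (X : (Fin d → ℕ) → ℝ) = fun i =>
      ∑ k : ∀ ν : Fin d, Fin (r ν), C k * ∏ ν, (u ν (k ν) : ℕ → ℝ) (i ν) := by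
    rw [hXeq, psi_coe]
  -- Part 1 --------------------------------------------------------------
  have hsub : X - Xt = elemT μ (w k₀) (z k₀) := by
    apply lp.ext
    funext i
    rw [lp.coeFn_sub, Pi.sub_apply, elemT_apply, hdecomp i, hXt i,
      ← Finset.sum_erase_add Finset.univ _ (Finset.mem_univ k₀)]
    ring
  have part1 : ‖X - Xt‖ = ‖z k₀‖ := by
    rw [hsub, norm_elemT, hw.1 k₀, one_mul]
  -- orthonormal extraction
  have horth : ∀ (cz : Fin (r μ) → ℝ), ⟪w k₀, ∑ k, cz k • w k⟫_ℝ = cz k₀ := by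
    intro cz
    rw [inner_sum]
    rw [Finset.sum_congr rfl fun k _ => by
      rw [real_inner_smul_right, orthonormal_iff_ite.1 hw k₀ k]]
    simp
  -- the coefficient elements for (C, u)
  have hFm : ∀ i' : {ν : Fin d // ν ≠ μ} → ℕ,
      (∑ a, mA μ C u a i' • u μ a : l2N) = ∑ k, (z k : _) i' • w k := by
    intro i'
    apply lp.ext
    funext n
    rw [fm_coords]
    have h1 := congrFun hXcoe (ins μ n i')
    rw [hdecomp (ins μ n i')] at h1
    rw [← h1, lp.coeFn_sum]
    simp only [Finset.sum_apply, lp.coeFn_smul, Pi.smul_apply, smul_eq_mul]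
    refine Finset.sum_congr rfl fun k _ => ?_
    rw [ins_self]
    have h2 : (fun ν : {ν : Fin d // ν ≠ μ} => ins μ n i' ν.1) = i' := ins_restr μ n i'
    rw [h2]
    ring
  -- Part 3 --------------------------------------------------------------
  have part3 : Xt ∉ Mset d r Mc := by
    rintro ⟨C', hC', u', hgram', hXtEq⟩
    have hXtcoe : (Xt : (Fin d → ℕ) → ℝ) = fun i =>
        ∑ k : ∀ ν : Fin d, Fin (r ν), C' k * ∏ ν, (u' ν (k ν) : ℕ → ℝ) (i ν) := by
      rw [hXtEq, psi_coe]
    set W := Submodule.span ℝ (Set.range fun k : {k : Fin (r μ) // k ≠ k₀} => w k.1) with hW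
    have hFm' : ∀ i' : {ν : Fin d // ν ≠ μ} → ℕ,
        (∑ a, mA μ C' u' a i' • u' μ a : l2N)
          = ∑ k ∈ Finset.univ.erase k₀, (z k : _) i' • w k := by
      intro i'
      apply lp.ext
      funext n
      rw [fm_coords]
      have h1 := congrFun hXtcoe (ins μ n i')
      rw [hXt (ins μ n i')] at h1
      rw [← h1, lp.coeFn_sum]
      simp only [Finset.sum_apply, lp.coeFn_smul, Pi.smul_apply, smul_eq_mul]
      refine Finset.sum_congr rfl fun k _ => ?_
      rw [ins_self]
      have h2 : (fun ν : {ν : Fin d // ν ≠ μ} => ins μ n i' ν.1) = i' := ins_restr μ n i'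
      rw [h2]
      ring
    have hFmW : ∀ i' : {ν : Fin d // ν ≠ μ} → ℕ,
        (∑ a, mA μ C' u' a i' • u' μ a : l2N) ∈ W := by
      intro i'
      rw [hFm' i']
      exact Submodule.sum_mem _ fun k hk => Submodule.smul_mem _ _
        (Submodule.subset_span ⟨⟨k, (Finset.mem_erase.1 hk).1⟩, rfl⟩)
    let mvec : ({ν : Fin d // ν ≠ μ} → ℕ) → EuclideanSpace ℝ (Fin (r μ)) :=
      fun i' => WithLp.toLp 2 (fun a => mA μ C' u' a i')
    set S : Submodule ℝ (EuclideanSpace ℝ (Fin (r μ))) := Submodule.span ℝ (Set.range mvec)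
      with hS
    have hStop : S = ⊤ := by
      by_contra hne
      have hSbot : Sᗮ ≠ ⊥ := fun h => hne (Submodule.orthogonal_eq_bot_iff.1 h)
      obtain ⟨c, hcS, hc0⟩ := (Submodule.ne_bot_iff Sᗮ).1 hSbot
      have hcm : ∀ i' : {ν : Fin d // ν ≠ μ} → ℕ, ∑ a, mA μ C' u' a i' * c a = 0 := by
        intro i'
        have hm := (Submodule.mem_orthogonal S c).1 hcS _ (Submodule.subset_span ⟨i', rfl⟩)
        rw [PiLp.inner_apply] at hm
        simpa [RCLike.inner_apply, mvec, mul_comm] using hm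
      have hswap : ∀ i' : {ν : Fin d // ν ≠ μ} → ℕ,
          ∑ b : ∀ ν : {ν : Fin d // ν ≠ μ}, Fin (r ν.1),
            (∑ a, c a * matricize d r μ C' a b)
              * ∏ ν : {ν : Fin d // ν ≠ μ}, (u' ν.1 (b ν) : ℕ → ℝ) (i' ν) = 0 := by
        intro i'
        rw [← hcm i']
        simp only [mA]
        trans ∑ b : ∀ ν : {ν : Fin d // ν ≠ μ}, Fin (r ν.1), ∑ a,
            c a * matricize d r μ C' a b
              * ∏ ν : {ν : Fin d // ν ≠ μ}, (u' ν.1 (b ν) : ℕ → ℝ) (i' ν)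
        · exact Finset.sum_congr rfl fun b _ => Finset.sum_mul _ _ _
        rw [Finset.sum_comm]
        refine Finset.sum_congr rfl fun a _ => ?_
        rw [Finset.sum_mul]
        refine Finset.sum_congr rfl fun b _ => ?_
        ring
      have hdv := prod_fun_eq_zero (fun ν : {ν : Fin d // ν ≠ μ} => Fin (r ν.1))
        (fun ν j n => (u' ν.1 j : ℕ → ℝ) n)
        (fun ν c hcn => gram_unit_coeffs' (hgram' ν.1) hcn)
        (fun b => ∑ a, c a * matricize d r μ C' a b) hswap
      have hvm : Matrix.vecMul c (matricize d r μ C') = 0 := by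
        funext b
        show dotProduct c (fun a => matricize d r μ C' a b) = 0
        rw [dotProduct]
        exact congrFun hdv b
      exact hc0 (by ext a; exact congrFun (full_rank_vecMul_inj _ (hfull C' hC' μ) hvm) a)
    have hu'W : ∀ a, u' μ a ∈ W := by
      have hTadd : ∀ (x y : EuclideanSpace ℝ (Fin (r μ))),
          ∑ a, (x + y) a • u' μ a = (∑ a, x a • u' μ a) + ∑ a, y a • u' μ a := by
        intro x y
        rw [← Finset.sum_add_distrib]
        exact Finset.sum_congr rfl fun a _ => by
          show (x a + y a) • u' μ a = _
          rw [add_smul]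
      let T : EuclideanSpace ℝ (Fin (r μ)) →ₗ[ℝ] l2N :=
        { toFun := fun cv => ∑ a, cv a • u' μ a,
          map_add' := hTadd,
          map_smul' := by
            intro cc x
            dsimp only
            rw [RingHom.id_apply, Finset.smul_sum]
            exact Finset.sum_congr rfl fun a _ => by
              show (cc * x a) • u' μ a = cc • x a • u' μ a
              rw [smul_smul] }
      have hTS : ∀ x ∈ S, T x ∈ W := by
        intro x hx
        have hle : S ≤ Submodule.comap T W := by
          rw [hS]
          apply Submodule.span_le.2
          rintro v ⟨i', rfl⟩
          show T _ ∈ W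
          exact hFmW i'
        exact hle hx
      intro a
      have hsingle : T (EuclideanSpace.single a 1) = u' μ a := by
        show ∑ a', EuclideanSpace.single a 1 a' • u' μ a' = u' μ a
        rw [Finset.sum_eq_single a
          (fun a' _ ha' => by rw [EuclideanSpace.single_apply, if_neg ha', zero_smul])
          (fun ha => absurd (Finset.mem_univ a) ha)]
        rw [EuclideanSpace.single_apply, if_pos rfl, one_smul]
      rw [← hsingle]
      exact hTS _ (hStop ▸ Submodule.mem_top)
    have hli : LinearIndependent ℝ (u' μ) := Fintype.linearIndependent_iff.2 (fun c hc a => by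
      have := gram_unit_coeffs (hgram' μ) hc
      exact congrFun this a)
    have h1 : Module.finrank ℝ (Submodule.span ℝ (Set.range (u' μ))) = r μ := by
      rw [finrank_span_eq_card hli, Fintype.card_fin]
    have hle : Submodule.span ℝ (Set.range (u' μ)) ≤ W :=
      Submodule.span_le.2 (by rintro v ⟨a, rfl⟩; exact hu'W a)
    have hfin : FiniteDimensional ℝ W := FiniteDimensional.span_of_finite ℝ (Set.finite_range _)
    have h2 : Module.finrank ℝ W ≤ Fintype.card {k : Fin (r μ) // k ≠ k₀} :=
      finrank_range_le_card _
    have h3 : Fintype.card {k : Fin (r μ) // k ≠ k₀} = r μ - 1 := by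
      have e1 : Fintype.card {k : Fin (r μ) // k = k₀} = 1 := by simp [Fintype.card_subtype_eq]
      have e2 := Fintype.card_subtype_compl (p := fun k : Fin (r μ) => k = k₀)
      have e3 : Fintype.card {k : Fin (r μ) // ¬k = k₀} = Fintype.card {k : Fin (r μ) // k ≠ k₀} :=
        rfl
      rw [Fintype.card_fin] at e2
      omega
    have h4 := Submodule.finrank_mono hle
    have h5 : r μ ≤ Module.finrank ℝ W := h1 ▸ h4
    have h6 : Module.finrank ℝ W ≤ r μ - 1 := h3 ▸ h2
    have := hr μ
    omega
  -- Part 2 --------------------------------------------------------------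
  have part2 : Xt ∈ weakClosure d (Mset d r Mc) := by
    have hwn : ‖w k₀‖ = 1 := hw.1 k₀
    have happrox : ∀ t : ℝ, t ≠ 0 → Xt + t • elemT μ (w k₀) (z k₀) ∈ Mset d r Mc := by
      intro t ht
      set u_t : ∀ ν : Fin d, Fin (r ν) → l2N :=
        Function.update u μ (fun a => Atl (w k₀) t (u μ a)) with hu_t
      have hut_mu : u_t μ = fun a => Atl (w k₀) t (u μ a) := Function.update_self μ _ u
      have hut_ne : ∀ ν, ν ≠ μ → u_t ν = u ν := fun ν h => Function.update_of_ne h _ u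
      refine ⟨C, hC, u_t, ?_, ?_⟩
      · intro ν
        rcases eq_or_ne ν μ with rfl | hne
        · rw [hut_mu]
          refine gram_unit_of_indep ?_
          intro c hc
          have h2 : Atl (w k₀) t (∑ a, c a • u ν a) = 0 := by
            rw [map_sum]
            rw [Finset.sum_congr rfl fun a _ => (Atl (w k₀) t).map_smul (c a) (u ν a)]
            exact hc
          have h3 : (∑ a, c a • u ν a) = 0 := by
            have h4 := congrArg (Atl (w k₀) t⁻¹) h2
            rw [Atl_inv (w k₀) hwn ht, map_zero] at h4
            exact h4
          exact gram_unit_coeffs (hgram ν) h3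
        · rw [hut_ne ν hne]
          exact hgram ν
      · -- Xt + t • E = Psi C u_t
        apply lp.ext
        funext i
        rw [psi_coe]
        dsimp only
        rw [sum_split_psi μ C u_t i]
        have hmA : ∀ a, mA μ C u_t a (restr μ i) = mA μ C u a (restr μ i) := by
          intro a
          simp only [mA]
          refine Finset.sum_congr rfl fun b _ => ?_
          congr 1
          exact Finset.prod_congr rfl fun ν _ => by rw [hut_ne ν.1 ν.2]
        have hcoord : ∀ a, (u_t μ a : ℕ → ℝ) (i μ)
            = (u μ a : ℕ → ℝ) (i μ) + ((t - 1) * ⟪w k₀, u μ a⟫_ℝ) * (w k₀ : ℕ → ℝ) (i μ) := by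
          intro a
          rw [hut_mu]
          show ((Atl (w k₀) t (u μ a) : l2N) : ℕ → ℝ) (i μ) = _
          rw [Atl_apply, lp.coeFn_add, Pi.add_apply, lp.coeFn_smul, Pi.smul_apply, smul_eq_mul]
        rw [Finset.sum_congr rfl fun a _ => by rw [hmA a, hcoord a]]
        symm
        have hXi : ∑ a, mA μ C u a (restr μ i) * (u μ a : ℕ → ℝ) (i μ)
            = (X : (Fin d → ℕ) → ℝ) i := by
          rw [hXcoe, ← sum_split_psi μ C u i]
        have hinner : ∑ a, mA μ C u a (restr μ i) * ⟪w k₀, u μ a⟫_ℝ = (z k₀ : _) (restr μ i) := by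
          have h5 : ⟪w k₀, ∑ a, mA μ C u a (restr μ i) • u μ a⟫_ℝ
              = (z k₀ : _) (restr μ i) := by
            rw [hFm (restr μ i), horth]
          rw [← h5, inner_sum]
          exact Finset.sum_congr rfl fun a _ => by rw [real_inner_smul_right]
        calc ∑ a, (mA μ C u a (restr μ i)
              * ((u μ a : ℕ → ℝ) (i μ) + ((t - 1) * ⟪w k₀, u μ a⟫_ℝ) * (w k₀ : ℕ → ℝ) (i μ)))
            = (∑ a, mA μ C u a (restr μ i) * (u μ a : ℕ → ℝ) (i μ))
              + (t - 1) * (∑ a, mA μ C u a (restr μ i) * ⟪w k₀, u μ a⟫_ℝ)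
                * (w k₀ : ℕ → ℝ) (i μ) := by
              rw [Finset.mul_sum, Finset.sum_mul, ← Finset.sum_add_distrib]
              exact Finset.sum_congr rfl fun a _ => by ring
          _ = (X : (Fin d → ℕ) → ℝ) i
              + (t - 1) * (z k₀ : _) (restr μ i) * (w k₀ : ℕ → ℝ) (i μ) := by
              rw [hXi, hinner]
          _ = ((Xt + t • elemT μ (w k₀) (z k₀) : Hsp d) : (Fin d → ℕ) → ℝ) i := by
              rw [lp.coeFn_add, Pi.add_apply, lp.coeFn_smul, Pi.smul_apply, smul_eq_mul,
                elemT_apply]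
              rw [hdecomp i, hXt i,
                ← Finset.sum_erase_add Finset.univ _ (Finset.mem_univ k₀)]
              ring
    have htend : Filter.Tendsto (fun n : ℕ => Xt + ((n : ℝ) + 1)⁻¹ • elemT μ (w k₀) (z k₀))
        Filter.atTop (nhds Xt) := by
      have h0 : Filter.Tendsto (fun n : ℕ => ((n : ℝ) + 1)⁻¹) Filter.atTop (nhds 0) := by
        simpa only [one_div] using tendsto_one_div_add_atTop_nhds_zero_nat (𝕜 := ℝ)
      have h1 := (h0.smul_const (elemT μ (w k₀) (z k₀))).const_add Xt
      simpa using h1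
    have hclos : Xt ∈ closure (Mset d r Mc) :=
      mem_closure_of_tendsto htend (Filter.Eventually.of_forall fun n =>
        happrox _ (by positivity))
    have hcont : Continuous (toWeak d) := (toWeakSpaceCLM ℝ (Hsp d)).continuous
    exact closure_subset_preimage_closure_image hcont hclos
  exact ⟨part1, part2, part3⟩

end Tuck

end Tucker
end
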